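/- Let H be an infinite-dimensional separable Hilbert space, let b₁, ..., b_n be bounded operators on H, and let p', q' be projections on H with infinite-dimensional ranges. Then there exist projections p ≤ p' and q ≤ q', both with infinite-dimensional ranges, such that p b_i q = 0 for all 1 ≤ i ≤ n. -/

import Mathlib

open scoped ComplexInnerProductSpace

noncomputable section

variable {H : Type*} [NormedAddCommGroup H] [InnerProductSpace ℂ H] [CompleteSpace H]

lemma exists_unit_orth (K : Submodule ℂ H) (hK : ¬ FiniteDimensional ℂ K) (s : Set H)
    (hs : s.Finite) :
    ∃ x : H, x ∈ K ∧ ‖x‖ = 1 ∧ ∀ y ∈ s, ⟪y, x⟫ = 0 := by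
  set F := Submodule.span ℂ s with hF
  haveI : FiniteDimensional ℂ F := FiniteDimensional.span_of_finite ℂ hs
  set T : K →ₗ[ℂ] F := (Submodule.orthogonalProjectionOnto F).toLinearMap ∘ₗ K.subtype with hT
  have hni : ¬ Function.Injective T := fun hinj => hK (FiniteDimensional.of_injective T hinj)
  have hker : LinearMap.ker T ≠ ⊥ := fun h => hni (LinearMap.ker_eq_bot.mp h)
  obtain ⟨x, hxker, hx0⟩ := Submodule.ne_bot_iff _ |>.mp hker
  have hxF : (x : H) ∈ Fᗮ := by
    have : Submodule.orthogonalProjectionOnto F (x : H) = 0 := hxker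
    exact Submodule.orthogonalProjectionOnto_eq_zero_iff.mp this
  have hxne : (x : H) ≠ 0 := fun h => hx0 (Subtype.ext h)
  have hnorm : ‖(x : H)‖ ≠ 0 := norm_ne_zero_iff.mpr hxne
  refine ⟨(‖(x : H)‖ : ℂ)⁻¹ • (x : H), K.smul_mem _ x.2, ?_, ?_⟩
  · simp [norm_smul, inv_mul_cancel₀ hnorm]
  · intro y hy
    rw [inner_smul_right]
    have := (Submodule.mem_orthogonal F (x : H)).mp hxF y (Submodule.subset_span hy)
    rw [this, mul_zero]

lemma step_ex (Kp Kq : Submodule ℂ H) (hKp : ¬ FiniteDimensional ℂ Kp)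
    (hKq : ¬ FiniteDimensional ℂ Kq) (n : ℕ) (b : Fin n → (H →L[ℂ] H))
    (k : ℕ) (hist : ℕ → H × H) :
    ∃ ef : H × H,
      ef.1 ∈ Kq ∧ ‖ef.1‖ = 1 ∧
      (∀ j < k, ⟪(hist j).1, ef.1⟫ = 0) ∧
      (∀ j < k, ∀ i, ⟪ContinuousLinearMap.adjoint (b i) (hist j).2, ef.1⟫ = 0) ∧
      ef.2 ∈ Kp ∧ ‖ef.2‖ = 1 ∧
      (∀ j < k, ⟪(hist j).2, ef.2⟫ = 0) ∧
      (∀ j < k, ∀ i, ⟪b i (hist j).1, ef.2⟫ = 0) ∧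
      (∀ i, ⟪b i ef.1, ef.2⟫ = 0) := by
  obtain ⟨x, hxK, hxn, hxo⟩ := exists_unit_orth Kq hKq
    (((fun j => (hist j).1) '' Set.Iio k) ∪
      ((fun ji : ℕ × Fin n => ContinuousLinearMap.adjoint (b ji.2) (hist ji.1).2) ''
        (Set.Iio k ×ˢ Set.univ)))
    (((Set.finite_Iio k).image _).union
      (((Set.finite_Iio k).prod Set.finite_univ).image _))
  obtain ⟨y, hyK, hyn, hyo⟩ := exists_unit_orth Kp hKp
    ((((fun j => (hist j).2) '' Set.Iio k) ∪
      ((fun ji : ℕ × Fin n => b ji.2 (hist ji.1).1) '' (Set.Iio k ×ˢ Set.univ))) ∪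
      ((fun i : Fin n => b i x) '' Set.univ))
    (((((Set.finite_Iio k).image _).union
      (((Set.finite_Iio k).prod Set.finite_univ).image _)).union
      (Set.finite_univ.image _)))
  refine ⟨(x, y), hxK, hxn, ?_, ?_, hyK, hyn, ?_, ?_, ?_⟩
  · exact fun j hj => hxo _ (Or.inl ⟨j, hj, rfl⟩)
  · exact fun j hj i => hxo _ (Or.inr ⟨(j, i), ⟨hj, Set.mem_univ i⟩, rfl⟩)
  · exact fun j hj => hyo _ (Or.inl (Or.inl ⟨j, hj, rfl⟩))
  · exact fun j hj i => hyo _ (Or.inl (Or.inr ⟨(j, i), ⟨hj, Set.mem_univ i⟩, rfl⟩))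
  · exact fun i => hyo _ (Or.inr ⟨i, Set.mem_univ i, rfl⟩)

lemma build (K' : H →L[ℂ] H) (hidem : K' * K' = K') (v : ℕ → H)
    (hv : Orthonormal ℂ v) (hmem : ∀ k, v k ∈ LinearMap.range (K' : H →ₗ[ℂ] H)) :
    ∃ P : H →L[ℂ] H, star P = P ∧ P * P = P ∧ K' * P = P ∧
      ¬ FiniteDimensional ℂ (LinearMap.range (P : H →ₗ[ℂ] H)) ∧
      (∀ x, P x ∈ (Submodule.span ℂ (Set.range v)).topologicalClosure) ∧
      (∀ z ∈ ((Submodule.span ℂ (Set.range v)).topologicalClosureᗮ : Submodule ℂ H), P z = 0) := by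
  set L := (Submodule.span ℂ (Set.range v)).topologicalClosure with hL
  haveI : CompleteSpace L := (Submodule.isClosed_topologicalClosure _).completeSpace_coe
  set P : H →L[ℂ] H := L.subtypeL ∘L Submodule.orthogonalProjectionOnto L with hP
  have hPx : ∀ x, P x ∈ L := fun x => (Submodule.orthogonalProjectionOnto L x).2
  have hfixL : ∀ y ∈ L, P y = y := by
    intro y hy
    have : Submodule.orthogonalProjectionOnto L y = ⟨y, hy⟩ :=
      Submodule.orthogonalProjectionOnto_mem_subspace_eq_self (⟨y, hy⟩ : L)
    simp [hP, ContinuousLinearMap.comp_apply, this]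
  have hvL : ∀ k, v k ∈ L := fun k =>
    (Submodule.le_topologicalClosure _) (Submodule.subset_span (Set.mem_range_self k))
  have hK'fix : ∀ w ∈ LinearMap.range (K' : H →ₗ[ℂ] H), K' w = w := by
    rintro w ⟨u, rfl⟩
    calc K' (K' u) = (K' * K') u := rfl
    _ = K' u := by rw [hidem]
  have hLle : L ≤ LinearMap.ker ((ContinuousLinearMap.id ℂ H - K' : H →L[ℂ] H) : H →ₗ[ℂ] H) := by
    refine Submodule.topologicalClosure_minimal _ (Submodule.span_le.mpr ?_)
      (ContinuousLinearMap.isClosed_ker _)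
    rintro w ⟨k, rfl⟩
    simp only [SetLike.mem_coe, LinearMap.mem_ker, ContinuousLinearMap.coe_coe, ContinuousLinearMap.coe_sub',
      Pi.sub_apply, ContinuousLinearMap.coe_id', id_eq]
    rw [hK'fix _ (hmem k), sub_self]
  have hK'L : ∀ w ∈ L, K' w = w := by
    intro w hw
    have := hLle hw
    simp only [LinearMap.mem_ker, ContinuousLinearMap.coe_coe, ContinuousLinearMap.coe_sub',
      Pi.sub_apply, ContinuousLinearMap.coe_id', id_eq, sub_eq_zero] at this
    exact this.symm
  refine ⟨P, isSelfAdjoint_starProjection L, ?_, ?_, ?_, hPx, ?_⟩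
  · ext x
    exact hfixL _ (hPx x)
  · ext x
    exact hK'L _ (hPx x)
  · intro hfin
    have hle : L ≤ LinearMap.range (P : H →ₗ[ℂ] H) := fun y hy => ⟨y, hfixL y hy⟩
    haveI : FiniteDimensional ℂ L := Submodule.finiteDimensional_of_le hle
    have hw : LinearIndependent ℂ (fun k => (⟨v k, hvL k⟩ : L)) := by
      have := hv.linearIndependent
      refine LinearIndependent.of_comp L.subtype ?_
      exact this
    exact Module.Finite.not_linearIndependent_of_infinite _ hw
  · intro z hz
    have : Submodule.orthogonalProjectionOnto L z = 0 := Submodule.orthogonalProjectionOnto_eq_zero_iff.mpr hz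
    simp [hP, ContinuousLinearMap.comp_apply, this]

noncomputable def seqF (Kp Kq : Submodule ℂ H) (hKp : ¬ FiniteDimensional ℂ Kp)
    (hKq : ¬ FiniteDimensional ℂ Kq) (n : ℕ) (b : Fin n → (H →L[ℂ] H)) : ℕ → H × H :=
  WellFounded.fix (Nat.lt_wfRel.wf) (fun k ih =>
    Classical.choose (step_ex Kp Kq hKp hKq n b k (fun j => if h : j < k then ih j h else 0)))

lemma seqF_eq (Kp Kq : Submodule ℂ H) (hKp : ¬ FiniteDimensional ℂ Kp)
    (hKq : ¬ FiniteDimensional ℂ Kq) (n : ℕ) (b : Fin n → (H →L[ℂ] H)) (k : ℕ) :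
    seqF Kp Kq hKp hKq n b k =
      Classical.choose (step_ex Kp Kq hKp hKq n b k
        (fun j => if h : j < k then seqF Kp Kq hKp hKq n b j else 0)) := by
  unfold seqF
  rw [WellFounded.fix_eq]

lemma seqF_spec (Kp Kq : Submodule ℂ H) (hKp : ¬ FiniteDimensional ℂ Kp)
    (hKq : ¬ FiniteDimensional ℂ Kq) (n : ℕ) (b : Fin n → (H →L[ℂ] H)) (k : ℕ) :
    (seqF Kp Kq hKp hKq n b k).1 ∈ Kq ∧ ‖(seqF Kp Kq hKp hKq n b k).1‖ = 1 ∧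
    (∀ j < k, ⟪(seqF Kp Kq hKp hKq n b j).1, (seqF Kp Kq hKp hKq n b k).1⟫ = 0) ∧
    (∀ j < k, ∀ i, ⟪ContinuousLinearMap.adjoint (b i) (seqF Kp Kq hKp hKq n b j).2,
      (seqF Kp Kq hKp hKq n b k).1⟫ = 0) ∧
    (seqF Kp Kq hKp hKq n b k).2 ∈ Kp ∧ ‖(seqF Kp Kq hKp hKq n b k).2‖ = 1 ∧
    (∀ j < k, ⟪(seqF Kp Kq hKp hKq n b j).2, (seqF Kp Kq hKp hKq n b k).2⟫ = 0) ∧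
    (∀ j < k, ∀ i, ⟪b i (seqF Kp Kq hKp hKq n b j).1, (seqF Kp Kq hKp hKq n b k).2⟫ = 0) ∧
    (∀ i, ⟪b i (seqF Kp Kq hKp hKq n b k).1, (seqF Kp Kq hKp hKq n b k).2⟫ = 0) := by
  have h := Classical.choose_spec (step_ex Kp Kq hKp hKq n b k
    (fun j => if h : j < k then seqF Kp Kq hKp hKq n b j else 0))
  rw [← seqF_eq] at h
  obtain ⟨h1, h2, h3, h4, h5, h6, h7, h8, h9⟩ := h
  refine ⟨h1, h2, ?_, ?_, h5, h6, ?_, ?_, h9⟩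
  · intro j hj; have := h3 j hj; rwa [dif_pos hj] at this
  · intro j hj i; have := h4 j hj i; rwa [dif_pos hj] at this
  · intro j hj; have := h7 j hj; rwa [dif_pos hj] at this
  · intro j hj i; have := h8 j hj i; rwa [dif_pos hj] at this

end

theorem stmt14 {H : Type*} [NormedAddCommGroup H] [InnerProductSpace ℂ H] [CompleteSpace H]
    [TopologicalSpace.SeparableSpace H] (hH : ¬ FiniteDimensional ℂ H)
    (n : ℕ) (b : Fin n → (H →L[ℂ] H))
    (p' q' : H →L[ℂ] H) (hp'_sa : star p' = p') (hp'_idem : p' * p' = p')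
    (hq'_sa : star q' = q') (hq'_idem : q' * q' = q')
    (hp'_inf : ¬ FiniteDimensional ℂ (LinearMap.range (p' : H →ₗ[ℂ] H)))
    (hq'_inf : ¬ FiniteDimensional ℂ (LinearMap.range (q' : H →ₗ[ℂ] H))) :
    ∃ p q : H →L[ℂ] H, star p = p ∧ p * p = p ∧ star q = q ∧ q * q = q ∧
      p' * p = p ∧ q' * q = q ∧
      ¬ FiniteDimensional ℂ (LinearMap.range (p : H →ₗ[ℂ] H)) ∧
      ¬ FiniteDimensional ℂ (LinearMap.range (q : H →ₗ[ℂ] H)) ∧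
      ∀ i : Fin n, p * b i * q = 0 := by
  set e : ℕ → H := fun k => (seqF (LinearMap.range (p' : H →ₗ[ℂ] H)) (LinearMap.range (q' : H →ₗ[ℂ] H))
    hp'_inf hq'_inf n b k).1 with he_def
  set f : ℕ → H := fun k => (seqF (LinearMap.range (p' : H →ₗ[ℂ] H)) (LinearMap.range (q' : H →ₗ[ℂ] H))
    hp'_inf hq'_inf n b k).2 with hf_def
  have hspec := fun k => seqF_spec (LinearMap.range (p' : H →ₗ[ℂ] H)) (LinearMap.range (q' : H →ₗ[ℂ] H))
    hp'_inf hq'_inf n b k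
  have he_mem : ∀ k, e k ∈ LinearMap.range (q' : H →ₗ[ℂ] H) := fun k => (hspec k).1
  have hen : ∀ k, ‖e k‖ = 1 := fun k => (hspec k).2.1
  have heo : ∀ k, ∀ j < k, ⟪e j, e k⟫ = 0 := fun k => (hspec k).2.2.1
  have hef : ∀ k, ∀ j < k, ∀ i, ⟪ContinuousLinearMap.adjoint (b i) (f j), e k⟫ = 0 :=
    fun k => (hspec k).2.2.2.1
  have hf_mem : ∀ k, f k ∈ LinearMap.range (p' : H →ₗ[ℂ] H) := fun k => (hspec k).2.2.2.2.1
  have hfn : ∀ k, ‖f k‖ = 1 := fun k => (hspec k).2.2.2.2.2.1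
  have hfo : ∀ k, ∀ j < k, ⟪f j, f k⟫ = 0 := fun k => (hspec k).2.2.2.2.2.2.1
  have hfe : ∀ k, ∀ j < k, ∀ i, ⟪b i (e j), f k⟫ = 0 := fun k => (hspec k).2.2.2.2.2.2.2.1
  have hfe' : ∀ k i, ⟪b i (e k), f k⟫ = 0 := fun k => (hspec k).2.2.2.2.2.2.2.2
  have key : ∀ (i : Fin n) (j k : ℕ), ⟪f j, b i (e k)⟫ = 0 := by
    intro i j k
    rcases lt_trichotomy j k with h | rfl | h
    · rw [← ContinuousLinearMap.adjoint_inner_left]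
      exact hef k j h i
    · rw [inner_eq_zero_symm]
      exact hfe' j i
    · rw [inner_eq_zero_symm]
      exact hfe j k h i
  have hone : Orthonormal ℂ e := by
    rw [orthonormal_iff_ite]
    intro j k
    rcases lt_trichotomy j k with h | rfl | h
    · rw [if_neg (Nat.ne_of_lt h)]
      exact heo k j h
    · rw [if_pos rfl, inner_self_eq_norm_sq_to_K, hen j]
      norm_num
    · rw [if_neg (Nat.ne_of_gt h), inner_eq_zero_symm]
      exact heo j k h
  have honf : Orthonormal ℂ f := by
    rw [orthonormal_iff_ite]
    intro j k
    rcases lt_trichotomy j k with h | rfl | h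
    · rw [if_neg (Nat.ne_of_lt h)]
      exact hfo k j h
    · rw [if_pos rfl, inner_self_eq_norm_sq_to_K, hfn j]
      norm_num
    · rw [if_neg (Nat.ne_of_gt h), inner_eq_zero_symm]
      exact hfo j k h
  obtain ⟨p, hps, hpi, hp'p, hpinf, hpL, hpzero⟩ := build p' hp'_idem f honf hf_mem
  obtain ⟨q, hqs, hqi, hq'q, hqinf, hqL, hqzero⟩ := build q' hq'_idem e hone he_mem
  refine ⟨p, q, hps, hpi, hqs, hqi, hp'p, hq'q, hpinf, hqinf, ?_⟩
  intro i
  ext x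
  simp only [ContinuousLinearMap.mul_apply, ContinuousLinearMap.zero_apply]
  apply hpzero
  -- goal: b i (q x) ∈ ((span ℂ (range f)).topologicalClosure)ᗮ
  have step1 : ∀ j, ⟪f j, b i (q x)⟫ = 0 := by
    intro j
    have hker : (Submodule.span ℂ (Set.range e)).topologicalClosure ≤
        LinearMap.ker (((innerSL ℂ (f j)).comp (b i) : H →L[ℂ] ℂ) : H →ₗ[ℂ] ℂ) := by
      refine Submodule.topologicalClosure_minimal _ (Submodule.span_le.mpr ?_)
        (ContinuousLinearMap.isClosed_ker _)
      rintro w ⟨k, rfl⟩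
      simp only [SetLike.mem_coe, LinearMap.mem_ker, ContinuousLinearMap.coe_coe, ContinuousLinearMap.coe_comp',
        Function.comp_apply, innerSL_apply_apply]
      exact key i j k
    have := hker (hqL x)
    simpa only [LinearMap.mem_ker, ContinuousLinearMap.coe_coe, ContinuousLinearMap.coe_comp', Function.comp_apply,
      innerSL_apply_apply] using this
  rw [Submodule.mem_orthogonal']
  intro u hu
  have hker2 : (Submodule.span ℂ (Set.range f)).topologicalClosure ≤
      LinearMap.ker ((innerSL ℂ (b i (q x)) : H →L[ℂ] ℂ) : H →ₗ[ℂ] ℂ) := by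
    refine Submodule.topologicalClosure_minimal _ (Submodule.span_le.mpr ?_)
      (ContinuousLinearMap.isClosed_ker _)
    rintro w ⟨j, rfl⟩
    simp only [SetLike.mem_coe, LinearMap.mem_ker, ContinuousLinearMap.coe_coe, innerSL_apply_apply]
    rw [inner_eq_zero_symm]
    exact step1 j
  have := hker2 hu
  simpa only [LinearMap.mem_ker, ContinuousLinearMap.coe_coe, innerSL_apply_apply] using this
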